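/- Let L be closed under a unary connective ¬ and let C be a C-logics on L satisfying Weak Compactness, ¬-R1 and ¬-R2. Then for every A ⊆ L, Cn(A) equals the intersection of all maximal consistent sets B with A ⊆ B. -/

import Mathlib

/-- `Cn C A` is the intersection of all theories of `C` that include `A`. -/
def Cn {L : Type*} (C : Set L → Set L) (A : Set L) : Set L :=
  ⋂₀ {T : Set L | A ⊆ T ∧ C T = T}

/-- A finite subset of the union of a nonempty chain is contained in some member. -/
lemma finite_subset_chain_sUnion {L : Type*} (c : Set (Set L))
    (hchain : IsChain (· ⊆ ·) c) (hne : c.Nonempty) (F : Set L) (hF : F.Finite)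
    (hsub : F ⊆ ⋃₀ c) : ∃ t ∈ c, F ⊆ t := by
  revert hsub
  refine Set.Finite.induction_on (motive := fun s _ => s ⊆ ⋃₀ c → ∃ t ∈ c, s ⊆ t) F hF (fun _ => ⟨hne.choose, hne.choose_spec, by simp⟩) ?_
  intro a s _ _ ih hsub
  obtain ⟨t, htc, hst⟩ := ih (fun x hx => hsub (Set.mem_insert_of_mem a hx))
  obtain ⟨u, huc, hau⟩ := hsub (Set.mem_insert a s)
  rcases hchain.total htc huc with h | h
  · exact ⟨u, huc, Set.insert_subset hau (hst.trans h)⟩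
  · exact ⟨t, htc, Set.insert_subset (h hau) hst⟩

/-- For a C-logics with Weak Compactness, ¬-R1 and ¬-R2, `Cn(A)` is the intersection of
all maximal consistent sets including `A`. -/
theorem stmt_14 {L : Type*} [Nonempty L] (neg : L → L) (C : Set L → Set L)
    (hIncl : ∀ A : Set L, A ⊆ C A)
    (hCum : ∀ A B : Set L, A ⊆ B → B ⊆ C A → C A = C B)
    (hWC : ∀ A : Set L, C A = Set.univ → ∃ B : Set L, B ⊆ A ∧ B.Finite ∧ C B = Set.univ)
    (hneg1 : ∀ (A : Set L) (a : L), C (A ∪ {a, neg a}) = Set.univ)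
    (hneg2 : ∀ (A : Set L) (a : L), C (A ∪ {neg a}) = Set.univ → a ∈ C A)
    (A : Set L) :
    Cn C A =
      ⋂₀ {B : Set L | A ⊆ B ∧ C B ≠ Set.univ ∧ ∀ B' : Set L, B ⊂ B' → C B' = Set.univ} := by
  -- inconsistency goes up
  have up : ∀ B T : Set L, B ⊆ T → C B = Set.univ → C T = Set.univ := by
    intro B T hBT hB
    have := hCum B T hBT (by rw [hB]; exact Set.subset_univ _)
    rw [← this, hB]
  -- Lindenbaum
  have lind : ∀ S : Set L, C S ≠ Set.univ →
      ∃ M, S ⊆ M ∧ C M ≠ Set.univ ∧ ∀ B' : Set L, M ⊂ B' → C B' = Set.univ := by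
    intro S hS
    obtain ⟨M, hSM, hMmem, hMmax⟩ := zorn_subset_nonempty {B : Set L | C B ≠ Set.univ}
      (fun c hc hchain hne => by
        refine ⟨⋃₀ c, ?_, fun s hs => Set.subset_sUnion_of_mem hs⟩
        intro hcon
        obtain ⟨F, hFsub, hFfin, hFincon⟩ := hWC _ hcon
        obtain ⟨t, htc, hFt⟩ := finite_subset_chain_sUnion c hchain hne F hFfin hFsub
        exact hc htc (up F t hFt hFincon)) S hS
    refine ⟨M, hSM, hMmem, fun B' hB' => ?_⟩
    by_contra hB'con
    exact hB'.not_subset (hMmax hB'con hB'.subset)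
  -- maximal consistent sets are theories
  have mcs_theory : ∀ B : Set L, C B ≠ Set.univ →
      (∀ B' : Set L, B ⊂ B' → C B' = Set.univ) → C B = B := by
    intro B hB hmax
    by_contra h
    have hss : B ⊂ C B := (hIncl B).ssubset_of_ne (Ne.symm h)
    have := hCum B (C B) hss.subset (le_refl _)
    have hb : ∀ b ∈ C B, b ∉ B → False := by
      intro b hb hbB
      have h1 : B ⊂ insert b B := Set.ssubset_insert hbB
      have h2 := hCum B (insert b B) h1.subset (Set.insert_subset hb (hIncl B))
      exact hB (h2.trans (hmax _ h1))
    obtain ⟨b, hbC, hbB⟩ := Set.exists_of_ssubset hss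
    exact hb b hbC hbB
  apply subset_antisymm
  · -- Cn A ⊆ intersection of maximal consistent
    intro x hx B hB
    obtain ⟨hAB, hBcon, hBmax⟩ := hB
    exact hx B ⟨hAB, mcs_theory B hBcon hBmax⟩
  · -- reverse
    intro x hx T hT
    obtain ⟨hAT, hTth⟩ := hT
    by_cases hTcon : C T = Set.univ
    · rw [hTth] at hTcon; rw [hTcon]; trivial
    · by_contra hxT
      -- T ∪ {neg x} is consistent
      have hcons : C (T ∪ {neg x}) ≠ Set.univ := by
        intro h
        have := hneg2 T x h
        rw [hTth] at this
        exact hxT this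
      obtain ⟨M, hTM, hMcon, hMmax⟩ := lind _ hcons
      have hAM : A ⊆ M := hAT.trans ((Set.subset_union_left).trans hTM)
      have hxM : x ∈ M := hx M ⟨hAM, hMcon, hMmax⟩
      have hnxM : neg x ∈ M := hTM (Set.mem_union_right _ rfl)
      have : M ∪ {x, neg x} = M := by
        apply Set.union_eq_self_of_subset_right
        intro y hy
        rcases hy with rfl | rfl
        · exact hxM
        · exact hnxM
      have := hneg1 M x
      rw [‹M ∪ {x, neg x} = M›] at this
      exact hMcon this
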